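/- Let (U,Θ,ρ) be a probability space, N ∈ ℕ, Σ a symmetric positive definite N×N real matrix, and δ ∈ ℝ^N. Let M, C₁, C₂ > 0 be constants and let G_ε : U → ℝ^N (ε ∈ (0,1]), G^L : U → ℝ^N (L ∈ ℕ) and G_0 : U → ℝ^N be measurable maps, all bounded in absolute value by M on U, such that for all z ∈ U, |G_ε(z) − G_0(z)| ≤ C₁ ε^{1/2} and |G^L(z) − G_0(z)| ≤ C₂ L^{1/2} 2^{−L}. Define Gibbs measures μ_ε and ν_L with densities proportional to exp(−Φ_ε) and exp(−Φ^L) with respect to ρ, where Φ_ε(z) = (1/2)⟨Σ^{-1}(δ − G_ε(z)), δ − G_ε(z)⟩ and Φ^L(z) = (1/2)⟨Σ^{-1}(δ − G^L(z)), δ − G^L(z)⟩. Then there is a constant c, depending only on M, C₁, C₂, |δ| and Σ, such that for all ε ∈ (0,1] and all L ∈ ℕ, d_Hell(μ_ε, ν_L) ≤ c (ε^{1/2} + L^{1/2} 2^{−L}). -/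

import Mathlib

open MeasureTheory Real Filter Matrix

/-- Euclidean norm on `ℝ^N`. -/
noncomputable def euclNorm {N : ℕ} (v : Fin N → ℝ) : ℝ := Real.sqrt (v ⬝ᵥ v)

/-- Least-squares potential `Φ(z) = ½ ⟨Σ⁻¹(δ - G z), δ - G z⟩`. -/
noncomputable def potential {U : Type*} {N : ℕ} (S : Matrix (Fin N) (Fin N) ℝ)
    (δ : Fin N → ℝ) (G : U → Fin N → ℝ) (z : U) : ℝ :=
  1 / 2 * ((S⁻¹).mulVec (δ - G z) ⬝ᵥ (δ - G z))

/-- Hellinger distance between two measures, absolutely continuous with respect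
to `ρ`, given by their densities `f, g`. -/
noncomputable def hellingerDist {U : Type*} [MeasurableSpace U] (ρ : Measure U)
    (f g : U → ℝ) : ℝ :=
  Real.sqrt (1 / 2 * ∫ z, (Real.sqrt (f z) - Real.sqrt (g z)) ^ 2 ∂ρ)

/-- Gibbs density `exp(-Φ)/Z` with `Z = ∫ exp(-Φ) dρ`. -/
noncomputable def gibbsDensity {U : Type*} [MeasurableSpace U] (ρ : Measure U)
    (Φ : U → ℝ) (z : U) : ℝ :=
  Real.exp (-Φ z) / ∫ w, Real.exp (-Φ w) ∂ρ

section AuxLemmas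

lemma euclNorm_eq_norm {N : ℕ} (v : Fin N → ℝ) :
    euclNorm v = ‖(WithLp.equiv 2 (Fin N → ℝ)).symm v‖ := by
  rw [EuclideanSpace.norm_eq]
  unfold euclNorm dotProduct
  congr 1
  refine Finset.sum_congr rfl fun i _ => ?_
  show v i * v i = ‖v i‖ ^ 2
  rw [Real.norm_eq_abs, sq_abs, sq]

lemma euclNorm_nonneg {N : ℕ} (v : Fin N → ℝ) : 0 ≤ euclNorm v := Real.sqrt_nonneg _

lemma euclNorm_sub_le {N : ℕ} (a b : Fin N → ℝ) : euclNorm (a - b) ≤ euclNorm a + euclNorm b := by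
  rw [euclNorm_eq_norm, euclNorm_eq_norm, euclNorm_eq_norm, WithLp.equiv_symm_apply, WithLp.toLp_sub]
  exact norm_sub_le _ _

lemma euclNorm_sub_comm {N : ℕ} (a b : Fin N → ℝ) : euclNorm (a - b) = euclNorm (b - a) := by
  rw [euclNorm_eq_norm, euclNorm_eq_norm, WithLp.equiv_symm_apply, WithLp.toLp_sub, WithLp.toLp_sub]
  exact norm_sub_rev _ _

lemma abs_le_euclNorm {N : ℕ} (v : Fin N → ℝ) (i : Fin N) : |v i| ≤ euclNorm v := by
  rw [← Real.sqrt_mul_self_eq_abs]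
  apply Real.sqrt_le_sqrt
  exact Finset.single_le_sum (fun j _ => mul_self_nonneg (v j)) (Finset.mem_univ i)







lemma mulVec_dot_bound {N : ℕ} (A : Matrix (Fin N) (Fin N) ℝ) (v w : Fin N → ℝ) :
    |A.mulVec v ⬝ᵥ w| ≤ (∑ i, ∑ j, |A i j|) * euclNorm v * euclNorm w := by
  have hEv := euclNorm_nonneg v
  have hEw := euclNorm_nonneg w
  simp only [dotProduct, mulVec]
  calc |∑ i, (∑ j, A i j * v j) * w i|
      ≤ ∑ i, |(∑ j, A i j * v j) * w i| := Finset.abs_sum_le_sum_abs _ _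
    _ ≤ ∑ i, ∑ j, |A i j| * euclNorm v * euclNorm w := by
        refine Finset.sum_le_sum fun i _ => ?_
        rw [abs_mul]
        calc |∑ j, A i j * v j| * |w i|
            ≤ (∑ j, |A i j| * euclNorm v) * euclNorm w := by
              refine mul_le_mul ?_ (abs_le_euclNorm w i) (abs_nonneg _)
                (Finset.sum_nonneg fun j _ => by positivity)
              refine (Finset.abs_sum_le_sum_abs _ _).trans (Finset.sum_le_sum fun j _ => ?_)
              rw [abs_mul]
              exact mul_le_mul_of_nonneg_left (abs_le_euclNorm v j) (abs_nonneg _)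
          _ = ∑ j, |A i j| * euclNorm v * euclNorm w := by rw [Finset.sum_mul]
    _ = (∑ i, ∑ j, |A i j|) * euclNorm v * euclNorm w := by
        simp [Finset.sum_mul]

lemma dot_dec {N : ℕ} (A : Matrix (Fin N) (Fin N) ℝ) (v₁ v₂ : Fin N → ℝ) :
    A.mulVec v₁ ⬝ᵥ v₁ - A.mulVec v₂ ⬝ᵥ v₂
      = A.mulVec (v₁ - v₂) ⬝ᵥ v₁ + A.mulVec v₂ ⬝ᵥ (v₁ - v₂) := by
  rw [Matrix.mulVec_sub, sub_dotProduct, dotProduct_sub]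
  ring

lemma potential_nonneg {U : Type*} {N : ℕ} {S : Matrix (Fin N) (Fin N) ℝ} (hS : S.PosDef)
    (δ : Fin N → ℝ) (G : U → Fin N → ℝ) (z : U) : 0 ≤ potential S δ G z := by
  have h := (hS.inv).posSemidef.dotProduct_mulVec_nonneg (δ - G z)
  simp only [star_trivial] at h
  unfold potential
  rw [dotProduct_comm]
  exact mul_nonneg (by norm_num) h

lemma potential_le {U : Type*} {N : ℕ} (S : Matrix (Fin N) (Fin N) ℝ) (δ : Fin N → ℝ)
    {M : ℝ} (hM : 0 ≤ M) (G : U → Fin N → ℝ) (hG : ∀ z, euclNorm (G z) ≤ M) (z : U) :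
    potential S δ G z ≤
      1/2 * ((∑ i, ∑ j, |S⁻¹ i j|) * (euclNorm δ + M) * (euclNorm δ + M)) := by
  have h1 := mulVec_dot_bound (S⁻¹) (δ - G z) (δ - G z)
  have h2 : euclNorm (δ - G z) ≤ euclNorm δ + M :=
    (euclNorm_sub_le δ (G z)).trans (by linarith [hG z])
  have hE := euclNorm_nonneg (δ - G z)
  have hD : (0:ℝ) ≤ euclNorm δ + M := by linarith [euclNorm_nonneg δ]
  have hK : (0:ℝ) ≤ ∑ i, ∑ j, |S⁻¹ i j| :=
    Finset.sum_nonneg fun i _ => Finset.sum_nonneg fun j _ => abs_nonneg _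
  unfold potential
  have h3 := (le_abs_self _).trans h1
  have h4 : euclNorm (δ - G z) * euclNorm (δ - G z)
      ≤ (euclNorm δ + M) * (euclNorm δ + M) := mul_le_mul h2 h2 hE hD
  nlinarith [mul_le_mul_of_nonneg_left h4 hK]

lemma potential_diff_le {U : Type*} {N : ℕ} (S : Matrix (Fin N) (Fin N) ℝ) (δ : Fin N → ℝ)
    {M : ℝ} (hM : 0 ≤ M) (G₁ G₂ : U → Fin N → ℝ) (h₁ : ∀ z, euclNorm (G₁ z) ≤ M)
    (h₂ : ∀ z, euclNorm (G₂ z) ≤ M) (z : U) :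
    |potential S δ G₁ z - potential S δ G₂ z| ≤
      (∑ i, ∑ j, |S⁻¹ i j|) * (euclNorm δ + M) * euclNorm (G₁ z - G₂ z) := by
  have hdec := dot_dec (S⁻¹) (δ - G₁ z) (δ - G₂ z)
  have hvv : (δ - G₁ z) - (δ - G₂ z) = G₂ z - G₁ z := by abel
  have hb1 := mulVec_dot_bound (S⁻¹) ((δ - G₁ z) - (δ - G₂ z)) (δ - G₁ z)
  have hb2 := mulVec_dot_bound (S⁻¹) (δ - G₂ z) ((δ - G₁ z) - (δ - G₂ z))
  have hE1 : euclNorm (δ - G₁ z) ≤ euclNorm δ + M :=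
    (euclNorm_sub_le δ (G₁ z)).trans (by linarith [h₁ z])
  have hE2 : euclNorm (δ - G₂ z) ≤ euclNorm δ + M :=
    (euclNorm_sub_le δ (G₂ z)).trans (by linarith [h₂ z])
  have hEd : euclNorm ((δ - G₁ z) - (δ - G₂ z)) = euclNorm (G₁ z - G₂ z) := by
    rw [hvv, euclNorm_sub_comm]
  have hK : (0:ℝ) ≤ ∑ i, ∑ j, |S⁻¹ i j| :=
    Finset.sum_nonneg fun i _ => Finset.sum_nonneg fun j _ => abs_nonneg _
  have hEd0 := euclNorm_nonneg ((δ - G₁ z) - (δ - G₂ z))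
  have hE10 := euclNorm_nonneg (δ - G₁ z)
  have hE20 := euclNorm_nonneg (δ - G₂ z)
  have hD : (0:ℝ) ≤ euclNorm δ + M := by linarith [euclNorm_nonneg δ]
  have habs : |potential S δ G₁ z - potential S δ G₂ z|
      = 1/2 * |(S⁻¹).mulVec (δ - G₁ z) ⬝ᵥ (δ - G₁ z) - (S⁻¹).mulVec (δ - G₂ z) ⬝ᵥ (δ - G₂ z)| := by
    unfold potential
    rw [← mul_sub, abs_mul]
    norm_num
  rw [habs, hdec, ← hEd]
  have htri := abs_add_le ((S⁻¹).mulVec ((δ - G₁ z) - (δ - G₂ z)) ⬝ᵥ (δ - G₁ z))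
    ((S⁻¹).mulVec (δ - G₂ z) ⬝ᵥ ((δ - G₁ z) - (δ - G₂ z)))
  have p1 := mul_le_mul_of_nonneg_left hE1 (mul_nonneg hK hEd0)
  have p2 := mul_le_mul_of_nonneg_right (mul_le_mul_of_nonneg_left hE2 hK) hEd0
  nlinarith [hb1, hb2]

lemma int_le_of_bound {U : Type*} [MeasurableSpace U] (ρ : Measure U) [IsProbabilityMeasure ρ]
    {h : U → ℝ} {B : ℝ} (hB : 0 ≤ B) (hh : ∀ z, h z ≤ B) : ∫ z, h z ∂ρ ≤ B := by
  by_cases hint : Integrable h ρ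
  · calc ∫ z, h z ∂ρ ≤ ∫ _z, B ∂ρ := integral_mono hint (integrable_const B) hh
      _ = B := by simp
  · rw [integral_undef hint]; exact hB

lemma exp_neg_lip {a b : ℝ} (ha : 0 ≤ a) (hb : 0 ≤ b) :
    |Real.exp (-a) - Real.exp (-b)| ≤ |a - b| := by
  wlog hab : b ≤ a generalizing a b
  · rw [abs_sub_comm, abs_sub_comm a b]; exact this hb ha (le_of_not_ge hab)
  have h5 : Real.exp (-a) = Real.exp (-b) * Real.exp (b - a) := by
    rw [← Real.exp_add]; ring_nf
  have h3 : Real.exp (-b) ≤ 1 := Real.exp_le_one_iff.mpr (by linarith)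
  have h4 : b - a + 1 ≤ Real.exp (b - a) := Real.add_one_le_exp (b - a)
  have h8 : Real.exp (b - a) ≤ 1 := Real.exp_le_one_iff.mpr (by linarith)
  have h6 : Real.exp (-a) ≤ Real.exp (-b) := Real.exp_le_exp.mpr (by linarith)
  have h7 : 0 < Real.exp (b - a) := Real.exp_pos _
  rw [abs_of_nonpos (by linarith), abs_of_nonneg (by linarith)]
  nlinarith [mul_le_mul_of_nonneg_right h3 (by linarith : (0:ℝ) ≤ 1 - Real.exp (b - a))]

lemma sqrt_lip {a b m : ℝ} (hm : 0 < m) (ha : m ≤ a) (hb : m ≤ b) :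
    |Real.sqrt a - Real.sqrt b| ≤ |a - b| / (2 * Real.sqrt m) := by
  have hsm : 0 < Real.sqrt m := Real.sqrt_pos.2 hm
  have ha0 : (0:ℝ) ≤ a := by linarith
  have hb0 : (0:ℝ) ≤ b := by linarith
  have ha' : Real.sqrt a * Real.sqrt a = a := Real.mul_self_sqrt ha0
  have hb' : Real.sqrt b * Real.sqrt b = b := Real.mul_self_sqrt hb0
  have key : |Real.sqrt a - Real.sqrt b| * (Real.sqrt a + Real.sqrt b) = |a - b| := by
    rw [← abs_of_nonneg (show (0:ℝ) ≤ Real.sqrt a + Real.sqrt b by positivity), ← abs_mul]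
    congr 1
    nlinarith
  have hsum : 2 * Real.sqrt m ≤ Real.sqrt a + Real.sqrt b := by
    have := Real.sqrt_le_sqrt ha
    have := Real.sqrt_le_sqrt hb
    linarith
  rw [le_div_iff₀ (by positivity)]
  calc |Real.sqrt a - Real.sqrt b| * (2 * Real.sqrt m)
      ≤ |Real.sqrt a - Real.sqrt b| * (Real.sqrt a + Real.sqrt b) :=
        mul_le_mul_of_nonneg_left hsum (abs_nonneg _)
    _ = |a - b| := key

set_option maxHeartbeats 1000000 in
lemma gibbs_hellinger_bound {U : Type*} [MeasurableSpace U] (ρ : Measure U)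
    [IsProbabilityMeasure ρ] (Φ₁ Φ₂ : U → ℝ) (K₀ η : ℝ) (hK₀ : 0 ≤ K₀) (hη : 0 ≤ η)
    (hm₁ : Measurable Φ₁) (hm₂ : Measurable Φ₂)
    (hb₁ : ∀ z, Φ₁ z ∈ Set.Icc 0 K₀) (hb₂ : ∀ z, Φ₂ z ∈ Set.Icc 0 K₀)
    (hd : ∀ z, |Φ₁ z - Φ₂ z| ≤ η) :
    hellingerDist ρ (gibbsDensity ρ Φ₁) (gibbsDensity ρ Φ₂) ≤ Real.exp (2 * K₀) * η := by
  set m : ℝ := Real.exp (-K₀) with hm_def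
  have hm0 : 0 < m := Real.exp_pos _
  have hm1 : m ≤ 1 := Real.exp_le_one_iff.mpr (by linarith)
  have hsm : 0 < Real.sqrt m := Real.sqrt_pos.2 hm0
  have hsm1 : Real.sqrt m ≤ 1 := by
    rw [show (1:ℝ) = Real.sqrt 1 by simp]
    exact Real.sqrt_le_sqrt hm1
  have hmsm : m ≤ Real.sqrt m := by
    nlinarith [Real.mul_self_sqrt hm0.le, Real.sqrt_nonneg m]
  -- generic facts about each potential
  have key : ∀ Φ : U → ℝ, Measurable Φ → (∀ z, Φ z ∈ Set.Icc 0 K₀) →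
      (∀ z, m ≤ Real.exp (-Φ z) ∧ Real.exp (-Φ z) ≤ 1) ∧
      Integrable (fun z => Real.exp (-Φ z)) ρ ∧
      m ≤ (∫ w, Real.exp (-Φ w) ∂ρ) ∧ (∫ w, Real.exp (-Φ w) ∂ρ) ≤ 1 := by
    intro Φ hm hb
    have hpt : ∀ z, m ≤ Real.exp (-Φ z) ∧ Real.exp (-Φ z) ≤ 1 := fun z =>
      ⟨Real.exp_le_exp.mpr (by linarith [(hb z).2]),
       Real.exp_le_one_iff.mpr (by linarith [(hb z).1])⟩
    have hint : Integrable (fun z => Real.exp (-Φ z)) ρ := by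
      refine Integrable.mono' (integrable_const 1) ((hm.neg.exp).aestronglyMeasurable) ?_
      filter_upwards with z
      rw [Real.norm_eq_abs, abs_of_pos (Real.exp_pos _)]
      exact (hpt z).2
    refine ⟨hpt, hint, ?_, ?_⟩
    · calc m = ∫ _w, m ∂ρ := by simp
        _ ≤ ∫ w, Real.exp (-Φ w) ∂ρ := integral_mono (integrable_const m) hint fun z => (hpt z).1
    · exact int_le_of_bound ρ zero_le_one fun z => (hpt z).2
  obtain ⟨hpt₁, hint₁, hZ₁m, hZ₁1⟩ := key Φ₁ hm₁ hb₁
  obtain ⟨hpt₂, hint₂, hZ₂m, hZ₂1⟩ := key Φ₂ hm₂ hb₂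
  set Z₁ : ℝ := ∫ w, Real.exp (-Φ₁ w) ∂ρ with hZ₁def
  set Z₂ : ℝ := ∫ w, Real.exp (-Φ₂ w) ∂ρ with hZ₂def
  have hZ₁0 : 0 < Z₁ := lt_of_lt_of_le hm0 hZ₁m
  have hZ₂0 : 0 < Z₂ := lt_of_lt_of_le hm0 hZ₂m
  -- |Z₁ - Z₂| ≤ η
  have hZdiff : |Z₁ - Z₂| ≤ η := by
    have : Z₁ - Z₂ = ∫ w, (Real.exp (-Φ₁ w) - Real.exp (-Φ₂ w)) ∂ρ :=
      (integral_sub hint₁ hint₂).symm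
    rw [this]
    calc |∫ w, (Real.exp (-Φ₁ w) - Real.exp (-Φ₂ w)) ∂ρ|
        ≤ ∫ w, |Real.exp (-Φ₁ w) - Real.exp (-Φ₂ w)| ∂ρ := by
          simpa [Real.norm_eq_abs] using
            norm_integral_le_integral_norm (fun w => Real.exp (-Φ₁ w) - Real.exp (-Φ₂ w)) (μ := ρ)
      _ ≤ η := int_le_of_bound ρ hη fun z =>
          (exp_neg_lip (hb₁ z).1 (hb₂ z).1).trans (hd z)
  -- pointwise bound on difference of sqrt densities
  set B : ℝ := Real.exp (2 * K₀) * η with hB_def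
  have hmm2 : m * m = Real.exp (-(2 * K₀)) := by
    rw [hm_def, ← Real.exp_add]
    congr 1
    ring
  have hBm : B = η / (m * m) := by
    rw [hB_def, hmm2, div_eq_mul_inv, ← Real.exp_neg, neg_neg, mul_comm]
  have hB0 : 0 ≤ B := by rw [hBm]; positivity
  have hptbd : ∀ z, |Real.sqrt (gibbsDensity ρ Φ₁ z) - Real.sqrt (gibbsDensity ρ Φ₂ z)| ≤ B := by
    intro z
    have he₁ := hpt₁ z
    have he₂ := hpt₂ z
    set a₁ : ℝ := Real.sqrt (Real.exp (-Φ₁ z))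
    set a₂ : ℝ := Real.sqrt (Real.exp (-Φ₂ z))
    set s₁ : ℝ := Real.sqrt Z₁
    set s₂ : ℝ := Real.sqrt Z₂
    have hg₁ : Real.sqrt (gibbsDensity ρ Φ₁ z) = a₁ / s₁ := by
      rw [gibbsDensity, Real.sqrt_div (Real.exp_pos _).le]
    have hg₂ : Real.sqrt (gibbsDensity ρ Φ₂ z) = a₂ / s₂ := by
      rw [gibbsDensity, Real.sqrt_div (Real.exp_pos _).le]
    have hs₁0 : 0 < s₁ := Real.sqrt_pos.2 hZ₁0
    have hs₂0 : 0 < s₂ := Real.sqrt_pos.2 hZ₂0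
    have hs₁m : Real.sqrt m ≤ s₁ := Real.sqrt_le_sqrt hZ₁m
    have hs₂m : Real.sqrt m ≤ s₂ := Real.sqrt_le_sqrt hZ₂m
    have ha₂1 : a₂ ≤ 1 := by
      rw [show (1:ℝ) = Real.sqrt 1 by simp]
      exact Real.sqrt_le_sqrt he₂.2
    have ha₂0 : 0 ≤ a₂ := Real.sqrt_nonneg _
    have hda : |a₁ - a₂| ≤ η / (2 * Real.sqrt m) :=
      (sqrt_lip hm0 he₁.1 he₂.1).trans
        (div_le_div_of_nonneg_right ((exp_neg_lip (hb₁ z).1 (hb₂ z).1).trans (hd z)) (by positivity)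
          |>.trans_eq rfl)
    have hds : |s₁ - s₂| ≤ η / (2 * Real.sqrt m) :=
      (sqrt_lip hm0 hZ₁m hZ₂m).trans
        (by exact div_le_div_of_nonneg_right hZdiff (by positivity))
    rw [hg₁, hg₂]
    have hdecomp : a₁ / s₁ - a₂ / s₂ = (a₁ - a₂) / s₁ + a₂ * (s₂ - s₁) / (s₁ * s₂) := by
      field_simp
      ring
    rw [hdecomp]
    have ht1 : |(a₁ - a₂) / s₁| ≤ (η / (2 * Real.sqrt m)) / Real.sqrt m := by
      rw [abs_div, abs_of_pos hs₁0]
      exact div_le_div₀ (by positivity) hda hsm hs₁m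
    have ht2 : |a₂ * (s₂ - s₁) / (s₁ * s₂)| ≤ (η / (2 * Real.sqrt m)) / (Real.sqrt m * Real.sqrt m) := by
      rw [abs_div, abs_of_pos (mul_pos hs₁0 hs₂0), abs_mul]
      refine div_le_div₀ (by positivity) ?_ (by positivity) (mul_le_mul hs₁m hs₂m hsm.le hs₁0.le)
      rw [abs_of_nonneg ha₂0, abs_sub_comm]
      calc a₂ * |s₁ - s₂| ≤ 1 * (η / (2 * Real.sqrt m)) :=
            mul_le_mul ha₂1 hds (abs_nonneg _) zero_le_one
        _ = η / (2 * Real.sqrt m) := one_mul _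
    have hmm : Real.sqrt m * Real.sqrt m = m := Real.mul_self_sqrt hm0.le
    have e1 : (η / (2 * Real.sqrt m)) / Real.sqrt m = η / (2 * m) := by
      rw [div_div, mul_assoc, hmm]
    have e2 : (η / (2 * Real.sqrt m)) / (Real.sqrt m * Real.sqrt m) = η / (2 * (Real.sqrt m * m)) := by
      rw [hmm, div_div]
      ring_nf
    have h12 : η / (2 * m) ≤ η / (2 * (m * m)) :=
      div_le_div_of_nonneg_left hη (by positivity) (by nlinarith)
    have h22 : η / (2 * (Real.sqrt m * m)) ≤ η / (2 * (m * m)) :=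
      div_le_div_of_nonneg_left hη (by positivity) (by nlinarith)
    calc |(a₁ - a₂) / s₁ + a₂ * (s₂ - s₁) / (s₁ * s₂)|
        ≤ |(a₁ - a₂) / s₁| + |a₂ * (s₂ - s₁) / (s₁ * s₂)| := abs_add_le _ _
      _ ≤ η / (2 * (m * m)) + η / (2 * (m * m)) := by
          rw [e1] at ht1; rw [e2] at ht2; linarith
      _ = η / (m * m) := by ring
      _ = B := hBm.symm
  -- conclude
  have hsq : ∀ z, (Real.sqrt (gibbsDensity ρ Φ₁ z) - Real.sqrt (gibbsDensity ρ Φ₂ z)) ^ 2 ≤ B ^ 2 := by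
    intro z
    have := abs_le.mp (hptbd z)
    exact sq_le_sq' (by linarith [this.1]) this.2
  have hintle : ∫ z, (Real.sqrt (gibbsDensity ρ Φ₁ z) - Real.sqrt (gibbsDensity ρ Φ₂ z)) ^ 2 ∂ρ ≤ B ^ 2 :=
    int_le_of_bound ρ (by positivity) hsq
  unfold hellingerDist
  calc Real.sqrt (1 / 2 * ∫ z, (Real.sqrt (gibbsDensity ρ Φ₁ z) - Real.sqrt (gibbsDensity ρ Φ₂ z)) ^ 2 ∂ρ)
      ≤ Real.sqrt (B ^ 2) := Real.sqrt_le_sqrt (by nlinarith)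
    _ = B := Real.sqrt_sq hB0


end AuxLemmas

set_option maxHeartbeats 1000000

/-- Hellinger rate for the finite element approximation of the posterior:
if `|G_ε − G_0| ≤ C₁ ε^{1/2}` and `|G^L − G_0| ≤ C₂ L^{1/2} 2^{−L}` with all
maps uniformly bounded, then `d_Hell(μ_ε, ν_L) ≤ c (ε^{1/2} + L^{1/2} 2^{−L})`. -/
theorem hellinger_rate_FE_approximation
    {U : Type*} [MeasurableSpace U] (ρ : Measure U) [IsProbabilityMeasure ρ]
    {N : ℕ} (S : Matrix (Fin N) (Fin N) ℝ) (hS : S.PosDef) (δ : Fin N → ℝ)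
    (M C₁ C₂ : ℝ) (hM : 0 < M) (hC₁ : 0 < C₁) (hC₂ : 0 < C₂)
    (Gep : ℝ → U → Fin N → ℝ) (Gfe : ℕ → U → Fin N → ℝ) (G0 : U → Fin N → ℝ)
    (hGepmeas : ∀ ε ∈ Set.Ioc (0 : ℝ) 1, Measurable (Gep ε))
    (hGfemeas : ∀ L, Measurable (Gfe L)) (hG0meas : Measurable G0)
    (hGepbdd : ∀ ε ∈ Set.Ioc (0 : ℝ) 1, ∀ z, euclNorm (Gep ε z) ≤ M)
    (hGfebdd : ∀ L, ∀ z, euclNorm (Gfe L z) ≤ M)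
    (hG0bdd : ∀ z, euclNorm (G0 z) ≤ M)
    (hGeprate : ∀ ε ∈ Set.Ioc (0 : ℝ) 1, ∀ z,
        euclNorm (Gep ε z - G0 z) ≤ C₁ * Real.sqrt ε)
    (hGferate : ∀ (L : ℕ) (z : U),
        euclNorm (Gfe L z - G0 z) ≤ C₂ * Real.sqrt L * 2 ^ (-(L : ℤ))) :
    ∃ c : ℝ, ∀ ε ∈ Set.Ioc (0 : ℝ) 1, ∀ L : ℕ,
      hellingerDist ρ (gibbsDensity ρ (potential S δ (Gep ε)))
          (gibbsDensity ρ (potential S δ (Gfe L)))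
        ≤ c * (Real.sqrt ε + Real.sqrt L * 2 ^ (-(L : ℤ))) := by
  classical
  set K : ℝ := ∑ i, ∑ j, |S⁻¹ i j| with hK_def
  have hK : 0 ≤ K :=
    Finset.sum_nonneg fun i _ => Finset.sum_nonneg fun j _ => abs_nonneg _
  set D : ℝ := euclNorm δ + M with hD_def
  have hD : 0 ≤ D := by
    have := euclNorm_nonneg δ
    rw [hD_def]; linarith
  set K₀ : ℝ := 1/2 * (K * D * D) with hK₀_def
  have hK₀ : 0 ≤ K₀ := by rw [hK₀_def]; positivity
  refine ⟨Real.exp (2 * K₀) * (K * D * (C₁ + C₂)), ?_⟩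
  intro ε hε L
  -- measurability of the potentials
  have hcont : Continuous (fun v : Fin N → ℝ => 1/2 * ((S⁻¹).mulVec (δ - v) ⬝ᵥ (δ - v))) := by
    simp only [mulVec, dotProduct, Pi.sub_apply]
    fun_prop
  have hmeas : ∀ (G : U → Fin N → ℝ), Measurable G → Measurable (potential S δ G) := by
    intro G hG
    exact hcont.measurable.comp hG
  have ha0 : 0 ≤ Real.sqrt ε := Real.sqrt_nonneg _
  have hb0 : 0 ≤ Real.sqrt (L : ℝ) * (2:ℝ) ^ (-(L : ℤ)) := by positivity
  -- bounds on the potentials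
  have hbd₁ : ∀ z, potential S δ (Gep ε) z ∈ Set.Icc 0 K₀ := fun z =>
    ⟨potential_nonneg hS _ _ _, potential_le S δ hM.le _ (hGepbdd ε hε) z⟩
  have hbd₂ : ∀ z, potential S δ (Gfe L) z ∈ Set.Icc 0 K₀ := fun z =>
    ⟨potential_nonneg hS _ _ _, potential_le S δ hM.le _ (hGfebdd L) z⟩
  -- Lipschitz estimate
  have hdiff : ∀ z, |potential S δ (Gep ε) z - potential S δ (Gfe L) z|
      ≤ K * D * (C₁ * Real.sqrt ε + C₂ * (Real.sqrt (L : ℝ) * (2:ℝ) ^ (-(L : ℤ)))) := by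
    intro z
    refine (potential_diff_le S δ hM.le _ _ (hGepbdd ε hε) (hGfebdd L) z).trans ?_
    have h1 := hGeprate ε hε z
    have h2 := hGferate L z
    have htri : euclNorm (Gep ε z - Gfe L z)
        ≤ C₁ * Real.sqrt ε + C₂ * (Real.sqrt (L : ℝ) * (2:ℝ) ^ (-(L : ℤ))) := by
      have hid : Gep ε z - Gfe L z = (Gep ε z - G0 z) - (Gfe L z - G0 z) := by abel
      rw [hid]
      calc euclNorm ((Gep ε z - G0 z) - (Gfe L z - G0 z))
          ≤ euclNorm (Gep ε z - G0 z) + euclNorm (Gfe L z - G0 z) := euclNorm_sub_le _ _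
        _ ≤ C₁ * Real.sqrt ε + C₂ * (Real.sqrt (L : ℝ) * (2:ℝ) ^ (-(L : ℤ))) := by
            rw [← mul_assoc]
            linarith
    exact mul_le_mul_of_nonneg_left htri (by positivity)
  have hη : 0 ≤ K * D * (C₁ * Real.sqrt ε + C₂ * (Real.sqrt (L : ℝ) * (2:ℝ) ^ (-(L : ℤ)))) := by
    positivity
  have hmain := gibbs_hellinger_bound ρ _ _ K₀
    (K * D * (C₁ * Real.sqrt ε + C₂ * (Real.sqrt (L : ℝ) * (2:ℝ) ^ (-(L : ℤ)))))
    hK₀ hη (hmeas _ (hGepmeas ε hε)) (hmeas _ (hGfemeas L)) hbd₁ hbd₂ hdiff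
  refine hmain.trans ?_
  have hfact : C₁ * Real.sqrt ε + C₂ * (Real.sqrt (L : ℝ) * (2:ℝ) ^ (-(L : ℤ)))
      ≤ (C₁ + C₂) * (Real.sqrt ε + Real.sqrt (L : ℝ) * (2:ℝ) ^ (-(L : ℤ))) := by
    nlinarith
  have hexp : (0:ℝ) ≤ Real.exp (2 * K₀) := (Real.exp_pos _).le
  nlinarith [mul_le_mul_of_nonneg_left hfact (mul_nonneg (mul_nonneg hexp hK) hD)]
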